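/- Let G be a simple graph on n vertices with independence number α(G). Then the edge bipartiteness ε_b(G) satisfies ε_b(G) ≤ (n - α(G))(n - α(G) - 1)/2. -/

import Mathlib

open Matrix

/-- The independence number: the largest cardinality of an independent set of vertices. -/
noncomputable def indepNumber {n : ℕ} (G : SimpleGraph (Fin n)) : ℕ :=
  sSup {k | ∃ s : Finset (Fin n), (∀ a ∈ s, ∀ b ∈ s, a ≠ b → ¬ G.Adj a b) ∧ s.card = k}

/-- The edge bipartiteness: the minimum number of edges whose deletion yields a
bipartite graph. -/
noncomputable def edgeBipartiteness {n : ℕ} (G : SimpleGraph (Fin n)) : ℕ :=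
  sInf {k | ∃ s : Finset (Sym2 (Fin n)), s.card = k ∧ ↑s ⊆ G.edgeSet ∧
    (G.deleteEdges ↑s).Colorable 2}

theorem edgeBipartiteness_le {n : ℕ} (G : SimpleGraph (Fin n)) :
    edgeBipartiteness G ≤ (n - indepNumber G) * (n - indepNumber G - 1) / 2 := by
  classical
  set A : Set ℕ :=
    {k | ∃ s : Finset (Fin n), (∀ a ∈ s, ∀ b ∈ s, a ≠ b → ¬ G.Adj a b) ∧ s.card = k} with hA
  have hne : A.Nonempty := ⟨0, ∅, by simp⟩
  have hbdd : BddAbove A := by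
    refine ⟨n, ?_⟩
    rintro k ⟨s, -, rfl⟩
    simpa using (Finset.card_le_univ s)
  have hmem : indepNumber G ∈ A := Nat.sSup_mem hne hbdd
  obtain ⟨s, hs_ind, hs_card⟩ := hmem
  -- the edges to delete: all edges of G inside the complement of s
  set t : Finset (Sym2 (Fin n)) := (sᶜ.offDiag.image Sym2.mk.uncurry) ∩ G.edgeFinset with ht
  have ht_sub : ↑t ⊆ G.edgeSet := by
    intro e he
    have : e ∈ G.edgeFinset := (Finset.mem_inter.mp he).2
    simpa [SimpleGraph.mem_edgeFinset] using this
  have ht_col : (G.deleteEdges ↑t).Colorable 2 := by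
    refine ⟨SimpleGraph.Coloring.mk (fun v => if v ∈ s then (0 : Fin 2) else 1) ?_⟩
    intro a b hab
    rw [SimpleGraph.deleteEdges_adj] at hab
    obtain ⟨hadj, hnot⟩ := hab
    by_cases ha : a ∈ s <;> by_cases hb : b ∈ s <;> simp [ha, hb]
    · exact hs_ind a ha b hb hadj.ne hadj
    · exact hnot (Finset.mem_inter.mpr
        ⟨Finset.mem_image.mpr ⟨(a, b), Finset.mem_offDiag.mpr
          ⟨Finset.mem_compl.mpr ha, Finset.mem_compl.mpr hb, hadj.ne⟩, rfl⟩,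
         SimpleGraph.mem_edgeFinset.mpr hadj⟩)
  have h1 : edgeBipartiteness G ≤ t.card := Nat.sInf_le ⟨t, rfl, ht_sub, ht_col⟩
  have h2 : t.card ≤ (sᶜ.card).choose 2 := by
    calc t.card ≤ (sᶜ.offDiag.image Sym2.mk.uncurry).card :=
          Finset.card_le_card (Finset.inter_subset_left)
      _ = (sᶜ.card).choose 2 := Sym2.card_image_offDiag _
  have hcompl : sᶜ.card = n - indepNumber G := by
    rw [Finset.card_compl, hs_card, Fintype.card_fin]
  rw [hcompl, Nat.choose_two_right] at h2
  exact h1.trans h2
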